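/- If a finite simple graph G is prime, then any two edges of G lie in the same edge class of G. -/

import Mathlib

/-- A module (homogeneous set) of a simple graph: every vertex outside `M` is adjacent
to every vertex of `M` or to no vertex of `M`. -/
def SimpleGraph.IsModuleSet {V : Type*} (G : SimpleGraph V) (M : Set V) : Prop :=
  ∀ v ∉ M, (∀ u ∈ M, G.Adj v u) ∨ (∀ u ∈ M, ¬ G.Adj v u)

/-- A graph is prime if all of its modules are trivial (size at most one, or all vertices). -/
def SimpleGraph.IsPrimeGraph {V : Type*} (G : SimpleGraph V) : Prop :=
  ∀ M : Set V, G.IsModuleSet M → M.ncard ≤ 1 ∨ M = Set.univ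

/-- The basic step of Gallai's relation `∧` on edges: `ab ∧ bc` whenever `ab` and `bc`
are edges sharing the endpoint `b` and `ac` is not an edge. -/
def SimpleGraph.EdgeStep {V : Type*} (G : SimpleGraph V) (e f : Sym2 V) : Prop :=
  ∃ a b c, G.Adj a b ∧ G.Adj b c ∧ ¬ G.Adj a c ∧ e = s(a, b) ∧ f = s(b, c)

/-- Two edges lie in the same edge class iff they are joined by a finite sequence of
edges in which consecutive edges are related by `∧` (transitive closure, with reflexivity). -/
def SimpleGraph.SameEdgeClass {V : Type*} (G : SimpleGraph V) (e f : Sym2 V) : Prop :=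
  Relation.ReflTransGen G.EdgeStep e f

namespace SimpleGraph

variable {V : Type*} (G : SimpleGraph V)

lemma edgeStep_symm {e f : Sym2 V} (h : G.EdgeStep e f) : G.EdgeStep f e := by
  obtain ⟨a, b, c, hab, hbc, hac, he, hf⟩ := h
  exact ⟨c, b, a, hbc.symm, hab.symm, fun h' => hac h'.symm,
    by rw [hf, Sym2.eq_swap], by rw [he, Sym2.eq_swap]⟩

lemma sameEdgeClass_symm {e f : Sym2 V} (h : G.SameEdgeClass e f) : G.SameEdgeClass f e :=
  (@Relation.ReflTransGen.stdSymm _ _ ⟨fun _ _ h' => G.edgeStep_symm h'⟩).symm _ _ h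

lemma sameEdgeClass_edge {e f : Sym2 V} (he : e ∈ G.edgeSet) (h : G.SameEdgeClass e f) :
    f ∈ G.edgeSet := by
  induction h with
  | refl => exact he
  | tail _ hstep _ =>
    obtain ⟨a, b, c, _, hbc, _, _, hf⟩ := hstep
    rw [hf]; exact G.mem_edgeSet.2 hbc

/-- If `v` lies on no edge of the class of `e`, then along any edge `s(x,y)` of the class,
adjacency of `v` to `x` forces adjacency of `v` to `y`. -/
lemma dich {e : Sym2 V} {x y v : V} (hxy : G.Adj x y)
    (hv : ∀ f, G.SameEdgeClass e f → v ∉ f)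
    (hef : G.SameEdgeClass e s(x, y)) (hvx : G.Adj v x) : G.Adj v y := by
  by_contra hvy
  have hstep : G.EdgeStep s(x, y) s(x, v) := by
    refine ⟨y, x, v, hxy.symm, hvx.symm, fun h' => hvy h'.symm, Sym2.eq_swap, rfl⟩
  exact hv _ (hef.tail hstep) (Sym2.mem_mk_right x v)

lemma status_iff {e : Sym2 V} {x y v : V} (hxy : G.Adj x y)
    (hv : ∀ f, G.SameEdgeClass e f → v ∉ f)
    (hef : G.SameEdgeClass e s(x, y)) :
    (∀ w ∈ (s(x, y) : Sym2 V), G.Adj v w) ↔ G.Adj v y := by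
  constructor
  · intro h; exact h y (Sym2.mem_mk_right x y)
  · intro h w hw
    rw [Sym2.mem_iff] at hw
    rcases hw with rfl | rfl
    · exact G.dich hxy.symm hv (by rwa [Sym2.eq_swap] at hef) h
    · exact h

lemma prop_const {e f : Sym2 V} {v : V}
    (hv : ∀ g, G.SameEdgeClass e g → v ∉ g)
    (hef : G.SameEdgeClass e f) :
    (∀ w ∈ f, G.Adj v w) ↔ (∀ w ∈ e, G.Adj v w) := by
  induction hef with
  | refl => exact Iff.rfl
  | @tail f g hef hstep ih =>
    obtain ⟨x, y, z, hxy, hyz, hxz, hfx, hgx⟩ := hstep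
    subst hfx hgx
    have h1 : (∀ w ∈ (s(x, y) : Sym2 V), G.Adj v w) ↔ G.Adj v y :=
      G.status_iff hxy hv hef
    have hefg : G.SameEdgeClass e s(z, y) := by
      rw [Sym2.eq_swap]
      exact hef.tail ⟨x, y, z, hxy, hyz, hxz, rfl, rfl⟩
    have h2 : (∀ w ∈ (s(z, y) : Sym2 V), G.Adj v w) ↔ G.Adj v y :=
      G.status_iff hyz.symm hv hefg
    rw [← ih, h1, show (s(y, z) : Sym2 V) = s(z, y) from Sym2.eq_swap]
    exact h2

/-- The vertex set of the edge class of `e` is a module. -/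
lemma class_module {e : Sym2 V} (he : e ∈ G.edgeSet) :
    G.IsModuleSet {v | ∃ f, G.SameEdgeClass e f ∧ v ∈ f} := by
  intro v hv
  have hv' : ∀ f, G.SameEdgeClass e f → v ∉ f := by
    intro f hf hvf; exact hv ⟨f, hf, hvf⟩
  by_cases hall : ∀ w ∈ e, G.Adj v w
  · left
    rintro u ⟨f, hef, huf⟩
    exact ((G.prop_const hv' hef).2 hall) u huf
  · right
    rintro u ⟨f, hef, huf⟩ hadj
    apply hall
    rw [← G.prop_const hv' hef]
    obtain ⟨u', rfl⟩ := Sym2.mem_iff_exists.1 huf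
    have huu' : G.Adj u u' := G.mem_edgeSet.1 (G.sameEdgeClass_edge he hef)
    intro w hw
    rw [Sym2.mem_iff] at hw
    rcases hw with rfl | rfl
    · exact hadj
    · exact G.dich huu' hv' hef hadj

lemma class_univ [Fintype V] (hG : G.IsPrimeGraph) {a b : V} (hab : G.Adj a b) :
    ∀ v, ∃ f, G.SameEdgeClass s(a, b) f ∧ v ∈ f := by
  have hmod := G.class_module (G.mem_edgeSet.2 hab)
  rcases hG _ hmod with h1 | huniv
  · exfalso
    have haM : a ∈ {v | ∃ f, G.SameEdgeClass s(a, b) f ∧ v ∈ f} :=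
      ⟨s(a, b), Relation.ReflTransGen.refl, Sym2.mem_mk_left a b⟩
    have hbM : b ∈ {v | ∃ f, G.SameEdgeClass s(a, b) f ∧ v ∈ f} :=
      ⟨s(a, b), Relation.ReflTransGen.refl, Sym2.mem_mk_right a b⟩
    have : 1 < Set.ncard {v | ∃ f, G.SameEdgeClass s(a, b) f ∧ v ∈ f} :=
      (Set.one_lt_ncard (Set.toFinite _)).2 ⟨a, haM, b, hbM, G.ne_of_adj hab⟩
    omega
  · intro v
    have : v ∈ Set.univ := Set.mem_univ v
    rw [← huniv] at this
    exact this

/-- Triangle lemma invariant: if the class of `s(b,c)` differs from the classes of both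
`s(a,b)` and `s(a,c)`, then `a` is adjacent to every vertex on every edge of that class,
via edges not in that class. -/
lemma triangle_inv {a b c : V} (hab : G.Adj a b) (hac : G.Adj a c)
    (h1 : ¬ G.SameEdgeClass s(b, c) s(a, b)) (h2 : ¬ G.SameEdgeClass s(b, c) s(a, c)) :
    ∀ f, G.SameEdgeClass s(b, c) f →
      ∀ w ∈ f, G.Adj a w ∧ ¬ G.SameEdgeClass s(b, c) s(a, w) := by
  intro f hf
  induction hf with
  | refl =>
    intro w hw
    rw [Sym2.mem_iff] at hw
    rcases hw with rfl | rfl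
    · exact ⟨hab, h1⟩
    · exact ⟨hac, h2⟩
  | @tail f g hef hstep ih =>
    obtain ⟨x, y, z, hxy, hyz, hxz, hfx, hgx⟩ := hstep
    subst hfx hgx
    have hx := ih x (Sym2.mem_mk_left x y)
    have hy := ih y (Sym2.mem_mk_right x y)
    have haz : G.Adj a z := by
      by_contra haz
      have hstep1 : G.EdgeStep s(a, y) s(y, z) := ⟨a, y, z, hy.1, hyz, haz, rfl, rfl⟩
      have : G.SameEdgeClass s(b, c) s(a, y) :=
        ((hef.tail ⟨x, y, z, hxy, hyz, hxz, rfl, rfl⟩).tail (G.edgeStep_symm hstep1))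
      exact hy.2 this
    have hclz : ¬ G.SameEdgeClass s(b, c) s(a, z) := by
      intro hS
      have hstep2 : G.EdgeStep s(x, a) s(a, z) := ⟨x, a, z, hx.1.symm, haz, hxz, rfl, rfl⟩
      have : G.SameEdgeClass s(b, c) s(x, a) := hS.tail (G.edgeStep_symm hstep2)
      rw [Sym2.eq_swap (a := x) (b := a)] at this
      exact hx.2 this
    intro w hw
    rw [Sym2.mem_iff] at hw
    rcases hw with rfl | rfl
    · exact hy
    · exact ⟨haz, hclz⟩

/-- In a prime graph, in any triangle the class of each edge coincides with the class of
one of the two other edges. -/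
lemma triangle_class [Fintype V] (hG : G.IsPrimeGraph) {a b c : V}
    (hab : G.Adj a b) (hbc : G.Adj b c) (hac : G.Adj a c) :
    G.SameEdgeClass s(b, c) s(a, b) ∨ G.SameEdgeClass s(b, c) s(a, c) := by
  by_contra h
  push_neg at h
  obtain ⟨f, hf, haf⟩ := G.class_univ hG hbc a
  exact G.irrefl (G.triangle_inv hab hac h.1 h.2 f hf a haf).1

/-- In a prime graph, two edges sharing a vertex are in the same class. -/
lemma adj_same [Fintype V] (hG : G.IsPrimeGraph) {u v w : V}
    (huv : G.Adj u v) (huw : G.Adj u w) : G.SameEdgeClass s(u, v) s(u, w) := by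
  by_cases hvw_eq : v = w
  · subst hvw_eq; exact Relation.ReflTransGen.refl
  by_cases hvw : G.Adj v w
  · by_contra h
    rcases G.triangle_class hG huv hvw huw with h1 | h1
    · rcases G.triangle_class hG huv.symm huw hvw with h2 | h2
      · rw [Sym2.eq_swap (a := v) (b := u)] at h2
        exact h (G.sameEdgeClass_symm h2)
      · exact h ((G.sameEdgeClass_symm h1).trans (G.sameEdgeClass_symm h2))
    · rcases G.triangle_class hG huw.symm huv hvw.symm with h2 | h2
      · rw [Sym2.eq_swap (a := w) (b := u)] at h2
        exact h h2
      · rw [Sym2.eq_swap (a := w) (b := v)] at h2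
        exact h (h2.trans h1)
  · refine Relation.ReflTransGen.single ⟨v, u, w, huv.symm, huw, hvw, Sym2.eq_swap, rfl⟩

end SimpleGraph

theorem prime_graph_one_edge_class {V : Type*} [Fintype V] (G : SimpleGraph V)
    (hG : G.IsPrimeGraph) :
    ∀ e ∈ G.edgeSet, ∀ f ∈ G.edgeSet, G.SameEdgeClass e f := by
  intro e he f hf
  induction e using Sym2.ind with | _ a b =>
  induction f using Sym2.ind with | _ c d =>
  rw [SimpleGraph.mem_edgeSet] at he hf
  obtain ⟨g, hg, hcg⟩ := G.class_univ hG he c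
  obtain ⟨x, rfl⟩ := Sym2.mem_iff_exists.1 hcg
  have hcx : G.Adj c x := G.mem_edgeSet.1 (G.sameEdgeClass_edge (G.mem_edgeSet.2 he) hg)
  exact hg.trans (G.adj_same hG hcx hf)
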